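/- Let f(θ) = σ e^{C₀|π/2 − θ|} for constants σ > 0, C₀ > 0, defined for θ ∈ [θ₀, π/2) ∪ (π/2, π − θ₀]. Then f'' + f = (C₀² + 1) f, and consequently for any Λ, M, θ₀ > 0, if C₀² + 1 > 2 Λ M⁴ / sin⁴θ₀, then at any point (r, θ) with f(θ)/r ≥ sin²θ/(2M²) the function v = r f(θ) + x₂²/(2M²) satisfies det D²v = (f''+f) sin²θ/(r M²) ≥ (C₀²+1) sin⁴θ₀/(2M⁴) > Λ. -/

import Mathlib

open Set Real

/-- For `f(θ) = σ e^{C₀|π/2 − θ|}` one has `f'' + f = (C₀² + 1) f` away from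
`θ = π/2`; consequently, if `C₀² + 1 > 2ΛM⁴/sin⁴θ₀`, then at any point `(r, θ)` of the
sector with `f(θ)/r ≥ sin²θ/(2M²)` the barrier `v = r f(θ) + x₂²/(2M²)` satisfies
`det D²v = (f''+f) sin²θ/(rM²) ≥ (C₀²+1) sin⁴θ₀/(2M⁴) > Λ`. -/
theorem stmt_13 (σ C₀ : ℝ) (hσ : 0 < σ) (hC₀ : 0 < C₀) (f : ℝ → ℝ)
    (hf : ∀ θ : ℝ, f θ = σ * Real.exp (C₀ * |π / 2 - θ|)) :
    (∀ θ : ℝ, θ ≠ π / 2 →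
      deriv (deriv f) θ + f θ = (C₀ ^ 2 + 1) * f θ) ∧
    ∀ Λ M θ₀ : ℝ, 0 < Λ → 0 < M → 0 < θ₀ → θ₀ < π / 2 →
      (C₀ ^ 2 + 1 > 2 * Λ * M ^ 4 / Real.sin θ₀ ^ 4) →
      ∀ r θ : ℝ, 0 < r → θ ∈ Set.Icc θ₀ (π - θ₀) → θ ≠ π / 2 →
        Real.sin θ ^ 2 / (2 * M ^ 2) ≤ f θ / r →
        (C₀ ^ 2 + 1) * Real.sin θ₀ ^ 4 / (2 * M ^ 4) ≤
            (deriv (deriv f) θ + f θ) * Real.sin θ ^ 2 / (r * M ^ 2) ∧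
          Λ < (C₀ ^ 2 + 1) * Real.sin θ₀ ^ 4 / (2 * M ^ 4) := by
  have key : ∀ θ : ℝ, θ ≠ π / 2 → deriv (deriv f) θ = C₀ ^ 2 * f θ := by
    intro θ hθ
    rcases lt_or_gt_of_ne hθ with h | h
    · set g : ℝ → ℝ := fun x => σ * Real.exp (C₀ * (π / 2 - x)) with hg
      have hgd : ∀ x, HasDerivAt g (-(C₀ * g x)) x := by
        intro x
        have h1 : HasDerivAt (fun x : ℝ => C₀ * (π / 2 - x)) (C₀ * (-1)) x :=
          ((hasDerivAt_id x).const_sub (π / 2)).const_mul C₀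
        have h2 := (h1.exp).const_mul σ
        convert h2 using 1
        all_goals first | rfl | (simp only [hg]; ring)
      have hev : f =ᶠ[nhds θ] g := by
        filter_upwards [Iio_mem_nhds h] with x hx
        rw [hf x, abs_of_nonneg (by simp only [mem_Iio] at hx; linarith)]
      have hfg : f θ = g θ := by
        rw [hf θ, abs_of_nonneg (by linarith)]
      have hd1 : deriv g = fun x => -(C₀ * g x) := funext fun x => (hgd x).deriv
      have hd2 : deriv (deriv g) θ = C₀ ^ 2 * g θ := by
        rw [hd1]
        have := (((hgd θ).const_mul C₀).neg).deriv
        rw [show (fun x => -(C₀ * g x)) = -fun y => C₀ * g y from rfl, this]; ring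
      rw [hev.deriv.deriv_eq, hd2, hfg]
    · set g : ℝ → ℝ := fun x => σ * Real.exp (C₀ * (x - π / 2)) with hg
      have hgd : ∀ x, HasDerivAt g (C₀ * g x) x := by
        intro x
        have h1 : HasDerivAt (fun x : ℝ => C₀ * (x - π / 2)) (C₀ * 1) x :=
          ((hasDerivAt_id x).sub_const (π / 2)).const_mul C₀
        have h2 := (h1.exp).const_mul σ
        convert h2 using 1
        all_goals first | rfl | (simp only [hg]; ring)
      have hev : f =ᶠ[nhds θ] g := by
        filter_upwards [Ioi_mem_nhds h] with x hx
        rw [hf x, abs_of_nonpos (by simp only [mem_Ioi] at hx; linarith)]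
        simp only [hg]; ring_nf
      have hfg : f θ = g θ := by
        rw [hf θ, abs_of_nonpos (by linarith)]
        simp only [hg]; ring_nf
      have hd1 : deriv g = fun x => C₀ * g x := funext fun x => (hgd x).deriv
      have hd2 : deriv (deriv g) θ = C₀ ^ 2 * g θ := by
        rw [hd1]
        have := ((hgd θ).const_mul C₀).deriv
        rw [this]; ring
      rw [hev.deriv.deriv_eq, hd2, hfg]
  constructor
  · intro θ hθ
    rw [key θ hθ]; ring
  · intro Λ M θ₀ hΛ hM hθ₀ hθ₀' hC r θ hr hθmem hθne hle
    obtain ⟨h1, h2⟩ := hθmem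
    have hπ := Real.pi_pos
    have hs₀ : 0 < Real.sin θ₀ := Real.sin_pos_of_pos_of_lt_pi hθ₀ (by linarith)
    have hss : Real.sin θ₀ ≤ Real.sin θ := by
      have hmono := Real.strictMonoOn_sin.monotoneOn
      rcases le_total θ (π / 2) with hle' | hle'
      · exact hmono ⟨by linarith, by linarith⟩ ⟨by linarith, hle'⟩ h1
      · rw [← Real.sin_pi_sub θ]
        exact hmono ⟨by linarith, by linarith⟩ ⟨by linarith, by linarith⟩ (by linarith)
    have hs : 0 < Real.sin θ := lt_of_lt_of_le hs₀ hss
    have hfθ : 0 < f θ := by rw [hf θ]; positivity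
    have h4 : Real.sin θ₀ ^ 4 ≤ Real.sin θ ^ 4 := pow_le_pow_left₀ hs₀.le hss 4
    have hkey : deriv (deriv f) θ + f θ = (C₀ ^ 2 + 1) * f θ := by
      rw [key θ hθne]; ring
    have hA : (0:ℝ) < C₀ ^ 2 + 1 := by positivity
    have hle2 : Real.sin θ ^ 2 * r ≤ f θ * (2 * M ^ 2) := by
      rw [div_le_div_iff₀ (by positivity) hr] at hle; linarith
    constructor
    · rw [hkey, div_le_div_iff₀ (by positivity) (by positivity)]
      nlinarith [mul_le_mul_of_nonneg_left hle2
          (show (0:ℝ) ≤ (C₀ ^ 2 + 1) * Real.sin θ ^ 2 * M ^ 2 by positivity),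
        mul_le_mul_of_nonneg_right h4
          (show (0:ℝ) ≤ (C₀ ^ 2 + 1) * r * M ^ 2 by positivity)]
    · rw [gt_iff_lt, div_lt_iff₀ (by positivity)] at hC
      rw [lt_div_iff₀ (by positivity)]
      nlinarith
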